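/- Let n ≥ 3 and let r be an integer with ⌊n/2⌋ < r ≤ n − 1. Then the compound curling number of the r-th power of the path graph P_n equals 2^(n−1−r) · (2(r + 1) − n). -/

import Mathlib

open Finset

/-- The degree of a vertex `v` in a simple graph `G`: the number of its neighbours. -/
noncomputable def gdeg {V : Type*} (G : SimpleGraph V) (v : V) : ℕ :=
  (G.neighborSet v).ncard

/-- The compound curling number of a finite simple graph: the product, over all
values `d` occurring as a vertex degree of `G`, of the number of vertices of degree `d`. -/
noncomputable def compoundCurlingNumber {V : Type*} [Fintype V] (G : SimpleGraph V) : ℕ :=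
  ∏ d ∈ Finset.univ.image (gdeg G), (Finset.univ.filter fun u => gdeg G u = d).card

/-- The `r`-th power of a simple graph `G`: same vertex set, two distinct vertices
adjacent iff their distance in `G` is (finite and) at most `r`. -/
def SimpleGraph.power {V : Type*} (G : SimpleGraph V) (r : ℕ) : SimpleGraph V where
  Adj u v := u ≠ v ∧ G.Reachable u v ∧ G.dist u v ≤ r
  symm := by
    constructor
    rintro u v ⟨h1, h2, h3⟩
    exact ⟨h1.symm, h2.symm, by rwa [SimpleGraph.dist_comm]⟩
  loopless := by
    constructor
    rintro v ⟨h1, -, -⟩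
    exact h1 rfl

section Aux
open SimpleGraph

lemma walk_lb {n : ℕ} {u v : Fin n} (W : (pathGraph n).Walk u v) :
    (u.val - v.val) + (v.val - u.val) ≤ W.length := by
  induction W with
  | nil => simp
  | cons h p ih =>
    rw [pathGraph_adj] at h
    simp only [SimpleGraph.Walk.length_cons]
    omega

lemma walk_ub {n : ℕ} : ∀ (d : ℕ) (u v : Fin n), u.val + d = v.val →
    ∃ W : (pathGraph n).Walk u v, W.length = d := by
  intro d
  induction d with
  | zero =>
    intro u v h
    have : u = v := Fin.ext (by omega)
    subst this
    exact ⟨SimpleGraph.Walk.nil, rfl⟩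
  | succ d ih =>
    intro u v h
    have hlt : u.val + 1 < n := by have := v.isLt; omega
    set u' : Fin n := ⟨u.val + 1, hlt⟩ with hu'
    have hadj : (pathGraph n).Adj u u' := pathGraph_adj.2 (Or.inl rfl)
    obtain ⟨W, hW⟩ := ih u' v (by simp [hu']; omega)
    exact ⟨SimpleGraph.Walk.cons hadj W, by simp [hW]⟩

lemma pathGraph_exists_walk {n : ℕ} (u v : Fin n) :
    ∃ W : (pathGraph n).Walk u v, W.length = (u.val - v.val) + (v.val - u.val) := by
  rcases le_total u.val v.val with h | h
  · obtain ⟨W, hW⟩ := walk_ub (v.val - u.val) u v (by omega)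
    exact ⟨W, by omega⟩
  · obtain ⟨W, hW⟩ := walk_ub (u.val - v.val) v u (by omega)
    exact ⟨W.reverse, by simp [hW]; omega⟩

lemma pathGraph_dist {n : ℕ} (u v : Fin n) :
    (pathGraph n).dist u v = (u.val - v.val) + (v.val - u.val) := by
  obtain ⟨W, hW⟩ := pathGraph_exists_walk u v
  refine le_antisymm (hW ▸ SimpleGraph.dist_le W) ?_
  obtain ⟨P, hP⟩ := SimpleGraph.Reachable.exists_walk_length_eq_dist ⟨W⟩
  calc _ ≤ P.length := walk_lb P
    _ = _ := hP

lemma power_adj {n r : ℕ} (u v : Fin n) :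
    ((pathGraph n).power r).Adj u v ↔
      u.val ≠ v.val ∧ (u.val - v.val) + (v.val - u.val) ≤ r := by
  obtain ⟨W, -⟩ := pathGraph_exists_walk u v
  constructor
  · rintro ⟨h1, -, h3⟩
    rw [pathGraph_dist] at h3
    exact ⟨fun h => h1 (Fin.ext h), h3⟩
  · rintro ⟨h1, h2⟩
    exact ⟨fun h => h1 (by rw [h]), ⟨W⟩, by rw [pathGraph_dist]; exact h2⟩

lemma fin_filter_card {n : ℕ} (p : ℕ → Prop) [DecidablePred p] :
    (Finset.univ.filter fun u : Fin n => p u.val).card = ((range n).filter p).card := by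
  rw [← Finset.card_image_of_injective _ Fin.val_injective]
  congr 1
  ext x
  simp only [mem_image, mem_filter, mem_univ, true_and, mem_range]
  constructor
  · rintro ⟨a, ha, rfl⟩
    exact ⟨a.isLt, ha⟩
  · rintro ⟨hx, hp⟩
    exact ⟨⟨x, hx⟩, hp, rfl⟩

lemma gdeg_power {n r : ℕ} (hn : 1 ≤ n) (v : Fin n) :
    gdeg ((pathGraph n).power r) v = min (v.val + r) (n - 1) - (v.val - r) := by
  classical
  have hset : ((pathGraph n).power r).neighborSet v
      = ↑(Finset.univ.filter fun u => ((pathGraph n).power r).Adj v u) := by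
    ext u; simp [SimpleGraph.neighborSet]
  rw [gdeg, hset, Set.ncard_coe_finset]
  have : ∀ u : Fin n, ((pathGraph n).power r).Adj v u ↔
      (v.val ≠ u.val ∧ (v.val - u.val) + (u.val - v.val) ≤ r) := fun u => power_adj v u
  rw [Finset.filter_congr (fun u _ => by rw [this u])]
  rw [fin_filter_card (fun x => v.val ≠ x ∧ (v.val - x) + (x - v.val) ≤ r)]
  have hv := v.isLt
  have heq : ((range n).filter fun x => v.val ≠ x ∧ (v.val - x) + (x - v.val) ≤ r)
      = (Finset.Icc (v.val - r) (min (v.val + r) (n - 1))).erase v.val := by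
    ext x
    simp only [mem_filter, mem_range, mem_erase, Finset.mem_Icc]
    omega
  rw [heq, Finset.card_erase_of_mem (by simp [Finset.mem_Icc]; omega), Nat.card_Icc]
  omega

end Aux

open SimpleGraph in
/-- For `n ≥ 3` and `⌊n/2⌋ < r ≤ n - 1`, the compound curling number of the
`r`-th power of the path graph `P_n` is `2 ^ (n - 1 - r) * (2(r + 1) - n)`. -/
theorem compoundCurlingNumber_pathGraph_power_of_gt (n r : ℕ) (hn : 3 ≤ n)
    (hr1 : n / 2 < r) (hr2 : r ≤ n - 1) :
    compoundCurlingNumber ((SimpleGraph.pathGraph n).power r) =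
      2 ^ (n - 1 - r) * (2 * (r + 1) - n) := by
  classical
  have h2r : n + 1 ≤ 2 * r := by omega
  set F : ℕ → ℕ := fun x => min (x + r) (n - 1) - (x - r) with hF
  have hdeg : ∀ u : Fin n, gdeg ((pathGraph n).power r) u = F u.val :=
    fun u => gdeg_power (by omega) u
  rw [compoundCurlingNumber]
  have himg : Finset.univ.image (gdeg ((pathGraph n).power r)) = (range n).image F := by
    ext d
    simp only [mem_image, mem_univ, true_and, mem_range]
    constructor
    · rintro ⟨u, rfl⟩
      exact ⟨u.val, u.isLt, (hdeg u).symm⟩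
    · rintro ⟨x, hx, rfl⟩
      exact ⟨⟨x, hx⟩, hdeg _⟩
  have hfilt : ∀ d, (Finset.univ.filter fun u => gdeg ((pathGraph n).power r) u = d).card
      = ((range n).filter fun x => F x = d).card := by
    intro d
    rw [Finset.filter_congr (fun u _ => by rw [hdeg u])]
    exact fin_filter_card (fun x => F x = d)
  rw [himg]
  have himg2 : (range n).image F = Finset.Icc r (n - 1) := by
    ext d
    simp only [mem_image, mem_range, Finset.mem_Icc]
    constructor
    · rintro ⟨x, hx, rfl⟩
      simp only [hF]
      omega
    · rintro ⟨h1, h2⟩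
      exact ⟨d - r, by omega, by simp only [hF]; omega⟩
  rw [himg2]
  have hIcc : Finset.Icc r (n - 1) = insert (n - 1) (Finset.Icc r (n - 2)) := by
    ext x
    simp only [Finset.mem_Icc, Finset.mem_insert]
    omega
  rw [hIcc, Finset.prod_insert (by simp [Finset.mem_Icc]; omega)]
  have htop : ((range n).filter fun x => F x = n - 1) = Finset.Icc (n - 1 - r) r := by
    ext x
    simp only [mem_filter, mem_range, Finset.mem_Icc, hF]
    omega
  have hmid : ∀ d ∈ Finset.Icc r (n - 2),
      ((range n).filter fun x => F x = d).card = 2 := by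
    intro d hd
    rw [Finset.mem_Icc] at hd
    have : ((range n).filter fun x => F x = d) = {d - r, n - 1 - (d - r)} := by
      ext x
      simp only [mem_filter, mem_range, Finset.mem_insert, Finset.mem_singleton, hF]
      omega
    rw [this, Finset.card_insert_of_notMem (by simp; omega), Finset.card_singleton]
  rw [Finset.prod_congr rfl (fun d hd => by rw [hfilt d, hmid d hd])]
  rw [Finset.prod_const, hfilt, htop, Nat.card_Icc, Nat.card_Icc]
  have : n - 2 + 1 - r = n - 1 - r := by omega
  rw [this, mul_comm]
  congr 1
  omega
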